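/- Let Γ be a limit periodic set of a continuous family of planar vector fields (X_λ) at the parameter λ₀, i.e. there are parameters λₙ → λ₀ and periodic orbits γₙ of X_{λₙ} converging to Γ in the Hausdorff metric. Then Γ is invariant under the flow of X_{λ₀}: for every a ∈ Γ and every time s for which the flow Φ(s, a, λ₀) is defined, Φ(s, a, λ₀) ∈ Γ. -/
import Mathlib


/-- A limit periodic set is invariant under the flow of the limiting vector field. -/
theorem limit_periodic_set_invariant {Λ : Type*} [MetricSpace Λ]
    (Φ : ℝ × (ℝ × ℝ) × Λ → ℝ × ℝ) (hΦ : Continuous Φ)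
    (lam : ℕ → Λ) (lam₀ : Λ) (hlam : Filter.Tendsto lam Filter.atTop (nhds lam₀))
    (γ : ℕ → Set (ℝ × ℝ)) (hγc : ∀ n, IsCompact (γ n)) (hγne : ∀ n, (γ n).Nonempty)
    (hinv : ∀ n, ∀ s : ℝ, ∀ x ∈ γ n, Φ (s, x, lam n) ∈ γ n)
    (Γ : Set (ℝ × ℝ)) (hΓc : IsCompact Γ) (hΓne : Γ.Nonempty)
    (hconv : Filter.Tendsto (fun n => Metric.hausdorffDist (γ n) Γ)
      Filter.atTop (nhds 0)) :
    ∀ a ∈ Γ, ∀ s : ℝ, Φ (s, a, lam₀) ∈ Γ := by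
  intro a ha s
  have hne : ∀ n, EMetric.hausdorffEdist (γ n) Γ ≠ ⊤ := fun n =>
    Metric.hausdorffEdist_ne_top_of_nonempty_of_bounded (hγne n) hΓne
      (hγc n).isBounded hΓc.isBounded
  choose x hx hxd using fun n => (hγc n).exists_infDist_eq_dist (hγne n) a
  have hxa : Filter.Tendsto x Filter.atTop (nhds a) := by
    rw [tendsto_iff_dist_tendsto_zero]
    have h1 : ∀ n, dist (x n) a ≤ Metric.hausdorffDist (γ n) Γ := by
      intro n
      rw [dist_comm, ← hxd n]
      calc Metric.infDist a (γ n) ≤ Metric.hausdorffDist Γ (γ n) :=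
            Metric.infDist_le_hausdorffDist_of_mem ha
              (by rw [EMetric.hausdorffEdist_comm]; exact hne n)
        _ = Metric.hausdorffDist (γ n) Γ := Metric.hausdorffDist_comm ..
    exact squeeze_zero (fun n => dist_nonneg) h1 hconv
  have hy : Filter.Tendsto (fun n => Φ (s, x n, lam n)) Filter.atTop
      (nhds (Φ (s, a, lam₀))) :=
    (hΦ.tendsto _).comp (by
      rw [nhds_prod_eq, nhds_prod_eq]
      exact tendsto_const_nhds.prodMk (hxa.prodMk hlam))
  have hmem : ∀ n, Φ (s, x n, lam n) ∈ γ n := fun n => hinv n s (x n) (hx n)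
  have hle : ∀ n, Metric.infDist (Φ (s, a, lam₀)) Γ ≤
      dist (Φ (s, a, lam₀)) (Φ (s, x n, lam n)) + Metric.hausdorffDist (γ n) Γ := by
    intro n
    calc Metric.infDist (Φ (s, a, lam₀)) Γ
        ≤ dist (Φ (s, a, lam₀)) (Φ (s, x n, lam n)) +
            Metric.infDist (Φ (s, x n, lam n)) Γ :=
          by rw [add_comm]; exact Metric.infDist_le_infDist_add_dist
      _ ≤ dist (Φ (s, a, lam₀)) (Φ (s, x n, lam n)) + Metric.hausdorffDist (γ n) Γ := by
          gcongr
          exact Metric.infDist_le_hausdorffDist_of_mem (hmem n) (hne n)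
  have hlim : Filter.Tendsto
      (fun n => dist (Φ (s, a, lam₀)) (Φ (s, x n, lam n)) + Metric.hausdorffDist (γ n) Γ)
      Filter.atTop (nhds 0) := by
    have hd : Filter.Tendsto (fun n => dist (Φ (s, a, lam₀)) (Φ (s, x n, lam n)))
        Filter.atTop (nhds 0) := by
      have := tendsto_iff_dist_tendsto_zero.mp hy
      simpa [dist_comm] using this
    simpa using hd.add hconv
  have h0 : Metric.infDist (Φ (s, a, lam₀)) Γ ≤ 0 :=
    ge_of_tendsto hlim (Filter.Eventually.of_forall hle)
  have h0' : Metric.infDist (Φ (s, a, lam₀)) Γ = 0 :=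
    le_antisymm h0 Metric.infDist_nonneg
  exact (hΓc.isClosed.mem_iff_infDist_zero hΓne).mpr h0'
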